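/- Let A and B be unital C*-algebras and φ : A → B a completely positive contractive map such that φ(1)φ(x*x) = φ(x)*φ(x) for all x ∈ A. Then φ is order zero: for all positive elements x, y ∈ A with xy = 0, one has φ(x)φ(y) = 0. -/

import Mathlib

open StarAlgebra in
lemma my_commute_of_mem_elemental {B : Type*} [CStarAlgebra B] {a b z : B}
    (hz : z ∈ elemental ℂ a) (h1 : Commute b a) (h2 : Commute b (star a)) :
    Commute b z := by
  induction hz using elemental.induction_on with
  | self => exact h1
  | star_self => exact h2
  | algebraMap r => exact (Algebra.commutes r b).symm
  | add u hu v hv pu pv => exact pu.add_right pv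
  | mul u hu v hv pu pv => exact pu.mul_right pv
  | closure s hs hP v hv =>
      exact closure_minimal (fun u hu => hP u hu)
        (isClosed_eq (continuous_const.mul continuous_id)
          (continuous_id.mul continuous_const)) hv

open StarAlgebra in
lemma my_commute_cfc_complex {B : Type*} [CStarAlgebra B] {a b : B}
    (g : ℂ → ℂ) (h1 : Commute b a) (h2 : Commute b (star a)) :
    Commute b (cfc g a) := by
  refine cfc_cases (fun z => Commute b z) a g (Commute.zero_right b) fun hf ha => ?_
  have hmem : cfcHom ha ⟨_, hf.restrict⟩ ∈ elemental ℂ a := by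
    rw [cfcHom_eq_of_isStarNormal]
    exact SetLike.coe_mem _
  exact my_commute_of_mem_elemental hmem h1 h2

lemma my_commute_sqrt {B : Type*} [CStarAlgebra B] [PartialOrder B] [StarOrderedRing B]
    {a b : B} (ha : 0 ≤ a) (h : Commute b a) : Commute b (CFC.sqrt a) := by
  have hsa : IsSelfAdjoint a := .of_nonneg ha
  have : CFC.sqrt a = cfc (fun z : ℂ => ((NNReal.sqrt z.re.toNNReal : ℝ) : ℂ)) a := by
    rw [CFC.sqrt_eq_cfc, cfc_nnreal_eq_real _ a ha, cfc_real_eq_complex]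
  rw [this]
  exact my_commute_cfc_complex _ h (by rw [hsa.star_eq]; exact h)

/-- anticommuting nonneg elements have zero product -/
lemma my_anticommute {B : Type*} [CStarAlgebra B] [PartialOrder B] [StarOrderedRing B]
    {a b : B} (ha : 0 ≤ a) (hb : 0 ≤ b) (h : a * b + b * a = 0) : a * b = 0 := by
  have hanti : a * b = -(b * a) := eq_neg_of_add_eq_zero_left h
  have hanti' : b * a = -(a * b) := eq_neg_of_add_eq_zero_right h
  have hsq : Commute b (a * a) := by
    have : b * (a * a) = a * a * b := by
      calc b * (a * a) = (b * a) * a := by rw [mul_assoc]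
        _ = -(a * b) * a := by rw [← hanti']
        _ = -(a * (b * a)) := by rw [neg_mul, mul_assoc]
        _ = -(a * -(a * b)) := by rw [← hanti']
        _ = a * (a * b) := by rw [mul_neg, neg_neg]
        _ = a * a * b := by rw [mul_assoc]
    exact this
  have hmulnn : 0 ≤ a * a := by
    have := star_mul_self_nonneg a
    rwa [(IsSelfAdjoint.of_nonneg ha).star_eq] at this
  have hcomm : Commute b (CFC.sqrt (a * a)) := my_commute_sqrt hmulnn hsq
  rw [CFC.sqrt_mul_self a ha] at hcomm
  have h2 : (2 : ℂ) • (a * b) = 0 := by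
    rw [two_smul]
    rw [hcomm.eq] at h
    exact h
  rcases smul_eq_zero.mp h2 with h' | h'
  · exact absurd h' two_ne_zero
  · exact h'

/-- A matrix over a star ring is "positive" if it factors as `star Y * Y`. -/
def MatrixStarPos {R : Type*} [NonUnitalSemiring R] [StarRing R] {n : ℕ}
    (M : Matrix (Fin n) (Fin n) R) : Prop :=
  ∃ Y : Matrix (Fin n) (Fin n) R, M = star Y * Y

/-- A c.p.c. map `φ` with `φ(1) φ(x*x) = φ(x)* φ(x)` is order zero. -/
theorem cpc_with_multiplicative_identity_is_order_zero
    {A B : Type*} [NormedRing A] [StarRing A] [CStarRing A]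
    [NormedAlgebra ℂ A] [StarModule ℂ A] [CompleteSpace A]
    [PartialOrder A] [StarOrderedRing A]
    [NormedRing B] [StarRing B] [CStarRing B]
    [NormedAlgebra ℂ B] [StarModule ℂ B] [CompleteSpace B]
    (φ : A →ₗ[ℂ] B)
    (hcontr : ∀ x : A, ‖φ x‖ ≤ ‖x‖)
    (hcp : ∀ (n : ℕ) (M : Matrix (Fin n) (Fin n) A),
      MatrixStarPos M → MatrixStarPos (M.map φ))
    (hmult : ∀ x : A, φ 1 * φ (star x * x) = star (φ x) * φ x)
    (x y : A) (hx : 0 ≤ x) (hy : 0 ≤ y) (hxy : x * y = 0) :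
    φ x * φ y = 0 := by
  letI : CStarAlgebra A := { }
  letI : CStarAlgebra B := { }
  letI : PartialOrder B := CStarAlgebra.spectralOrder B
  haveI : StarOrderedRing B := CStarAlgebra.spectralOrderedRing B
  have hsx : star x = x := (IsSelfAdjoint.of_nonneg hx).star_eq
  have hsy : star y = y := (IsSelfAdjoint.of_nonneg hy).star_eq
  have hyx : y * x = 0 := by
    have : star (x * y) = 0 := by rw [hxy, star_zero]
    rwa [star_mul, hsx, hsy] at this
  -- φ is positive
  have hφpos : ∀ a : A, 0 ≤ a → 0 ≤ φ a := by
    intro a ha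
    have hr : a = star (CFC.sqrt a) * CFC.sqrt a := by
      rw [(IsSelfAdjoint.of_nonneg (CFC.sqrt_nonneg (a := a))).star_eq,
        CFC.sqrt_mul_sqrt_self a ha]
    obtain ⟨Z, hZ⟩ := hcp 1 (Matrix.of fun _ _ => a)
      ⟨Matrix.of fun _ _ => CFC.sqrt a, by
        ext i j
        fin_cases i; fin_cases j
        simpa [Matrix.mul_apply] using hr⟩
    have h00 : φ a = star (Z 0 0) * Z 0 0 := by
      have := congrFun (congrFun hZ 0) 0
      simpa [Matrix.mul_apply, Matrix.map_apply] using this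
    rw [h00]
    exact star_mul_self_nonneg _
  have hpx : 0 ≤ φ x := hφpos x hx
  have hpy : 0 ≤ φ y := hφpos y hy
  have hsφx : star (φ x) = φ x := (IsSelfAdjoint.of_nonneg hpx).star_eq
  have hsφy : star (φ y) = φ y := (IsSelfAdjoint.of_nonneg hpy).star_eq
  -- the key anticommutation relation
  have key : φ x * φ y + φ y * φ x = 0 := by
    have e1 : star (x + y) * (x + y) = star x * x + star y * y := by
      rw [star_add, hsx, hsy, add_mul, mul_add, mul_add, hxy, hyx]
      abel
    have e2 : φ x * φ x + φ y * φ y =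
        φ x * φ x + φ x * φ y + (φ y * φ x + φ y * φ y) := by
      have h1 := hmult (x + y)
      rw [e1, map_add, mul_add, hmult x, hmult y, hsφx, hsφy] at h1
      rw [h1, map_add, star_add, hsφx, hsφy, add_mul, mul_add, mul_add]
    calc φ x * φ y + φ y * φ x
        = (φ x * φ x + φ x * φ y + (φ y * φ x + φ y * φ y))
            - (φ x * φ x + φ y * φ y) := by abel
      _ = (φ x * φ x + φ y * φ y) - (φ x * φ x + φ y * φ y) := by rw [← e2]
      _ = 0 := sub_self _
  exact my_anticommute hpx hpy key
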